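/- arXiv:1110.4777 — 5 statements merged into one kernel-verified Lean document; each statement's English description precedes it below -/
import Mathlib

section
/- Let Λ be a countable group and a : Λ × Λ → [0,∞) satisfy a(i,j) = a(ki,kj) for all i,j,k and ∑_i a(e,i) < ∞. Then there exists a metric d on Λ such that: (i) d(i,j) = d(ki,kj) for all i,j,k ∈ Λ; (ii) for every M < ∞ the ball {i ∈ Λ : d(e,i) ≤ M} is finite; and (iii) for every γ ≥ 0, ∑_i a(e,i) e^{γ d(e,i)} < ∞. -/
open scoped Pointwise

private lemma list_prod_mem_pow {Λ : Type*} [Group Λ] (A : Set Λ) :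
    ∀ l : List Λ, (∀ x ∈ l, x ∈ A) → l.prod ∈ A ^ l.length := by
  intro l
  induction l with
  | nil => intro _; simp [Set.mem_one]
  | cons x xs ih =>
      intro h
      rw [List.prod_cons, List.length_cons, pow_succ']
      exact Set.mul_mem_mul (h x (List.mem_cons_self))
        (ih fun y hy => h y (List.mem_cons_of_mem x hy))

private lemma set_pow_finite {Λ : Type*} [Group Λ] {A : Set Λ} (h : A.Finite) :
    ∀ n : ℕ, (A ^ n).Finite := by
  intro n
  induction n with
  | zero => simpa [pow_zero] using Set.finite_one
  | succ n ih => rw [pow_succ]; exact ih.mul h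

private lemma filter_ne_one_prod {Λ : Type*} [Group Λ] [DecidableEq Λ] (l : List Λ) :
    (l.filter (fun s => s ≠ 1)).prod = l.prod := by
  induction l with
  | nil => rfl
  | cons x xs ih =>
      simp only [ne_eq, decide_not] at ih ⊢
      by_cases hx : x = 1
      · simp [List.filter_cons, hx, ih]
      · simp [List.filter_cons, hx, ih]

private lemma filter_ne_one_wsum {Λ : Type*} [Group Λ] [DecidableEq Λ] (w : Λ → ℝ)
    (hw : w 1 = 0) (l : List Λ) :
    ((l.filter (fun s => s ≠ 1)).map w).sum = (l.map w).sum := by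
  induction l with
  | nil => rfl
  | cons x xs ih =>
      simp only [ne_eq, decide_not] at ih ⊢
      by_cases hx : x = 1
      · simp [List.filter_cons, hx, ih, hw]
      · simp [List.filter_cons, hx, ih]

private lemma length_le_wsum {Λ : Type*} (w : Λ → ℝ) :
    ∀ l : List Λ, (∀ x ∈ l, 1 ≤ w x) → (l.length : ℝ) ≤ (l.map w).sum := by
  intro l
  induction l with
  | nil => simp
  | cons x xs ih =>
      intro h
      have h1 := h x (List.mem_cons_self)
      have h2 := ih fun y hy => h y (List.mem_cons_of_mem x hy)
      simp only [List.length_cons, List.map_cons, List.sum_cons]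
      push_cast
      linarith

/-- Existence of a slowly growing left-invariant metric: given left-invariant infection
rates `a` with finite total rate, there is a left-invariant metric `d` on the countable
group `Λ` with finite balls and all exponential moments `∑_i a(e,i) e^{γ d(e,i)} < ∞`. -/
theorem stmt4 {Λ : Type*} [Group Λ] [Countable Λ]
    (a : Λ → Λ → ℝ)
    (hnn : ∀ i j, 0 ≤ a i j)
    (hdiag : ∀ i, a i i = 0)
    (hinv : ∀ i j k : Λ, a (k * i) (k * j) = a i j)
    (hsum : Summable (fun i => a 1 i)) :
    ∃ d : Λ → Λ → ℝ,
      (∀ i j, 0 ≤ d i j) ∧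
      (∀ i j, d i j = 0 ↔ i = j) ∧
      (∀ i j, d i j = d j i) ∧
      (∀ i j k, d i k ≤ d i j + d j k) ∧
      (∀ i j k : Λ, d (k * i) (k * j) = d i j) ∧
      (∀ M : ℝ, {i : Λ | d 1 i ≤ M}.Finite) ∧
      (∀ γ : ℝ, 0 ≤ γ → Summable (fun i => a 1 i * Real.exp (γ * d 1 i))) := by
  classical
  obtain ⟨f, hf⟩ := Countable.exists_injective_nat Λ
  -- the symmetrized rate function
  set b : Λ → ℝ := fun i => a 1 i + a 1 i⁻¹ with hbdef
  have hbnn : ∀ i, 0 ≤ b i := fun i => add_nonneg (hnn _ _) (hnn _ _)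
  have hbsum : Summable b := by
    have h2 : Summable (fun i : Λ => a 1 i⁻¹) := (Equiv.inv Λ).summable_iff.mpr hsum
    exact hsum.add h2
  have hb1 : b 1 = 0 := by simp [hbdef, hdiag]
  have hble : ∀ i, a 1 i ≤ b i := fun i => le_add_of_nonneg_right (hnn _ _)
  -- tail sets
  have tail : ∀ n : ℕ, ∃ s : Finset Λ, ∀ t : Finset Λ, Disjoint t s →
      ∑ i ∈ t, b i ≤ Real.exp (-((n : ℝ) + 1) ^ 2) := by
    intro n
    obtain ⟨s, hs⟩ := summable_iff_vanishing.mp hbsum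
      (Set.Iio (Real.exp (-((n : ℝ) + 1) ^ 2))) (Iio_mem_nhds (Real.exp_pos _))
    exact ⟨s, fun t ht => le_of_lt (hs t ht)⟩
  choose S hS using tail
  -- the finite sets T n
  have hEfin : ∀ n : ℕ, (f ⁻¹' (Set.Iic n)).Finite :=
    fun n => Set.Finite.preimage hf.injOn (Set.finite_Iic n)
  set U : ℕ → Finset Λ := fun n => (Finset.range (n + 1)).biUnion S ∪ (hEfin n).toFinset
    with hUdef
  set T : ℕ → Finset Λ := fun n => U n ∪ (U n).image (·⁻¹) with hTdef
  have hUmono : ∀ m n : ℕ, m ≤ n → U m ⊆ U n := by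
    intro m n hmn
    apply Finset.union_subset_union
    · exact Finset.biUnion_subset_biUnion_of_subset_left _
        (Finset.range_subset_range.mpr (by omega))
    · intro x hx
      simp only [Set.Finite.mem_toFinset, Set.mem_preimage, Set.mem_Iic] at hx ⊢
      omega
  have hTmono : ∀ m n : ℕ, m ≤ n → T m ⊆ T n := by
    intro m n hmn
    exact Finset.union_subset_union (hUmono m n hmn)
      (Finset.image_subset_image (hUmono m n hmn))
  have hTsymm : ∀ n (i : Λ), i ∈ T n → i⁻¹ ∈ T n := by
    intro n i hi
    rcases Finset.mem_union.mp hi with h | h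
    · exact Finset.mem_union_right _ (Finset.mem_image_of_mem _ h)
    · rcases Finset.mem_image.mp h with ⟨j, hj, hji⟩
      apply Finset.mem_union_left
      rwa [← hji, inv_inv]
  have hTcov : ∀ i : Λ, ∃ n, i ∈ T n := by
    intro i
    refine ⟨f i, Finset.mem_union_left _ (Finset.mem_union_right _ ?_)⟩
    simp [Set.Finite.mem_toFinset]
  have hTtail : ∀ n (t : Finset Λ), Disjoint t (T n) →
      ∑ i ∈ t, b i ≤ Real.exp (-((n : ℝ) + 1) ^ 2) := by
    intro n t ht
    apply hS n
    apply Finset.disjoint_of_subset_right _ ht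
    intro x hx
    apply Finset.mem_union_left
    apply Finset.mem_union_left
    exact Finset.mem_biUnion.mpr ⟨n, Finset.self_mem_range_succ n, hx⟩
  -- the weight function
  set N : Λ → ℕ := fun i => Nat.find (hTcov i) with hNdef
  have hNspec : ∀ i, i ∈ T (N i) := fun i => Nat.find_spec (hTcov i)
  have hNmin : ∀ i m, m < N i → i ∉ T m := fun i m hm => Nat.find_min (hTcov i) hm
  have hNinv : ∀ i : Λ, N i⁻¹ = N i := by
    intro i
    apply le_antisymm
    · exact Nat.find_le (hTsymm _ _ (hNspec i))
    · have := hTsymm _ _ (hNspec i⁻¹)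
      rw [inv_inv] at this
      exact Nat.find_le this
  set w : Λ → ℝ := fun i => if i = 1 then 0 else (N i : ℝ) + 1 with hwdef
  have hw0 : ∀ i, 0 ≤ w i := by
    intro i
    simp only [hwdef]
    split
    · exact le_refl 0
    · positivity
  have hw1 : w 1 = 0 := by simp [hwdef]
  have hwinv : ∀ i : Λ, w i⁻¹ = w i := by
    intro i
    simp only [hwdef, inv_eq_one, hNinv]
  have hwge : ∀ i : Λ, i ≠ 1 → 1 ≤ w i := by
    intro i hi
    simp only [hwdef, if_neg hi]
    have h0 : (0:ℝ) ≤ (N i : ℝ) := Nat.cast_nonneg _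
    linarith
  -- the word weight and the metric
  set W : List Λ → ℝ := fun l => (l.map w).sum with hWdef
  have hWnn : ∀ l, 0 ≤ W l := by
    intro l
    apply List.sum_nonneg
    intro x hx
    rcases List.mem_map.mp hx with ⟨y, _, rfl⟩
    exact hw0 y
  set Sx : Λ → Set ℝ := fun x => {r | ∃ l : List Λ, l.prod = x ∧ W l = r} with hSxdef
  have hSne : ∀ x, (Sx x).Nonempty := fun x => ⟨W [x], [x], by simp, rfl⟩
  have hSbdd : ∀ x, BddBelow (Sx x) := by
    intro x
    refine ⟨0, fun r hr => ?_⟩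
    rcases hr with ⟨l, _, rfl⟩
    exact hWnn l
  set D : Λ → ℝ := fun x => sInf (Sx x) with hDdef
  have hDle : ∀ (x : Λ) (l : List Λ), l.prod = x → D x ≤ W l :=
    fun x l hl => csInf_le (hSbdd x) ⟨l, hl, rfl⟩
  have hD0le : ∀ x, 0 ≤ D x := by
    intro x
    apply le_csInf (hSne x)
    rintro r ⟨l, _, rfl⟩
    exact hWnn l
  have hD1 : D 1 = 0 :=
    le_antisymm (by simpa [hWdef] using hDle 1 [] (by simp)) (hD0le 1)
  have hDge1 : ∀ x : Λ, x ≠ 1 → 1 ≤ D x := by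
    intro x hx
    apply le_csInf (hSne x)
    rintro r ⟨l, hl, rfl⟩
    have hne : l.prod ≠ 1 := hl ▸ hx
    obtain ⟨s, hs, hs1⟩ := List.exists_mem_ne_one_of_prod_ne_one hne
    have h1 : w s ≤ W l := by
      apply List.single_le_sum
      · intro r hr
        rcases List.mem_map.mp hr with ⟨y, _, rfl⟩
        exact hw0 y
      · exact List.mem_map_of_mem (f := w) hs
    exact le_trans (hwge s hs1) h1
  have hDinvle : ∀ x : Λ, D x⁻¹ ≤ D x := by
    intro x
    apply le_csInf (hSne x)
    rintro r ⟨l, hl, rfl⟩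
    have hprod : ((l.map fun y => y⁻¹).reverse).prod = x⁻¹ := by
      rw [← List.prod_inv_reverse, hl]
    have hWeq : W ((l.map fun y => y⁻¹).reverse) = W l := by
      simp only [hWdef, List.map_reverse, List.sum_reverse, List.map_map]
      congr 1
      apply List.map_congr_left
      intro y _
      exact hwinv y
    calc D x⁻¹ ≤ W ((l.map fun y => y⁻¹).reverse) := hDle _ _ hprod
      _ = W l := hWeq
  have hDsymm : ∀ x : Λ, D x⁻¹ = D x := by
    intro x
    refine le_antisymm (hDinvle x) ?_
    have := hDinvle x⁻¹
    rwa [inv_inv] at this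
  have hDtri : ∀ x y : Λ, D (x * y) ≤ D x + D y := by
    intro x y
    have key : ∀ r ∈ Sx x, ∀ s ∈ Sx y, D (x * y) ≤ r + s := by
      rintro r ⟨l1, hl1, rfl⟩ s ⟨l2, hl2, rfl⟩
      have hprod : (l1 ++ l2).prod = x * y := by rw [List.prod_append, hl1, hl2]
      have hsum' : W (l1 ++ l2) = W l1 + W l2 := by
        simp [hWdef, List.map_append, List.sum_append]
      calc D (x * y) ≤ W (l1 ++ l2) := hDle _ _ hprod
        _ = W l1 + W l2 := hsum'
    have h1 : ∀ r ∈ Sx x, D (x * y) - r ≤ D y := by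
      intro r hr
      apply le_csInf (hSne y)
      intro s hs
      linarith [key r hr s hs]
    have h2 : D (x * y) - D y ≤ D x := by
      apply le_csInf (hSne x)
      intro r hr
      linarith [h1 r hr]
    linarith
  -- the metric
  refine ⟨fun i j => D (i⁻¹ * j), ?_, ?_, ?_, ?_, ?_, ?_, ?_⟩
  · intro i j; exact hD0le _
  · intro i j
    show D (i⁻¹ * j) = 0 ↔ i = j
    constructor
    · intro h
      by_contra hij
      have : i⁻¹ * j ≠ 1 := by
        intro hc
        exact hij (by rw [← one_mul j, ← mul_inv_cancel i, mul_assoc, hc, mul_one])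
      linarith [hDge1 _ this]
    · rintro rfl
      rw [inv_mul_cancel]
      exact hD1
  · intro i j
    show D (i⁻¹ * j) = D (j⁻¹ * i)
    have : j⁻¹ * i = (i⁻¹ * j)⁻¹ := by simp
    rw [this, hDsymm]
  · intro i j k
    show D (i⁻¹ * k) ≤ D (i⁻¹ * j) + D (j⁻¹ * k)
    have : i⁻¹ * k = (i⁻¹ * j) * (j⁻¹ * k) := by simp [mul_assoc]
    rw [this]
    exact hDtri _ _
  · intro i j k
    show D ((k * i)⁻¹ * (k * j)) = D (i⁻¹ * j)
    have : (k * i)⁻¹ * (k * j) = i⁻¹ * j := by simp [mul_inv_rev, mul_assoc]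
    rw [this]
  -- finite balls
  · intro M
    show {i : Λ | D (1⁻¹ * i) ≤ M}.Finite
    have hset : {i : Λ | D (1⁻¹ * i) ≤ M} = {i : Λ | D i ≤ M} := by
      simp
    rw [hset]
    set K : ℕ := ⌈M⌉₊ + 1 with hKdef
    set A : Set Λ := insert (1 : Λ) (↑(T K) : Set Λ) with hAdef
    have hAfin : A.Finite := Set.Finite.insert _ (T K).finite_toSet
    have hA1 : (1 : Λ) ∈ A := Set.mem_insert _ _
    apply Set.Finite.subset (set_pow_finite hAfin K)
    intro i hi
    simp only [Set.mem_setOf_eq] at hi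
    have hlt : sInf (Sx i) < M + 1 := lt_of_le_of_lt hi (by linarith)
    obtain ⟨r, hr, hrM⟩ := exists_lt_of_csInf_lt (hSne i) hlt
    obtain ⟨l, hl, rfl⟩ := hr
    set l' : List Λ := l.filter (fun s => s ≠ 1) with hl'def
    have hl'prod : l'.prod = i := by rw [hl'def, filter_ne_one_prod, hl]
    have hl'W : W l' = W l := filter_ne_one_wsum w hw1 l
    have hl'mem : ∀ s ∈ l', s ≠ 1 ∧ s ∈ l := by
      intro s hs
      rw [hl'def, List.mem_filter] at hs
      exact ⟨by simpa using hs.2, hs.1⟩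
    -- each letter of l' is in T K
    have hletters : ∀ s ∈ l', s ∈ A := by
      intro s hs
      obtain ⟨hs1, hsl⟩ := hl'mem s hs
      have hws : w s ≤ W l := by
        apply List.single_le_sum
        · intro x hx
          rcases List.mem_map.mp hx with ⟨y, _, rfl⟩
          exact hw0 y
        · exact List.mem_map_of_mem (f := w) hsl
      have hws2 : (N s : ℝ) + 1 < M + 1 := by
        have : w s = (N s : ℝ) + 1 := if_neg hs1
        linarith [this ▸ (lt_of_le_of_lt hws hrM)]
      have hNs : (N s : ℝ) < M := by linarith
      have hNsK : N s ≤ K := by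
        have : (N s : ℝ) < (⌈M⌉₊ : ℝ) + 1 := lt_of_lt_of_le hNs
          (by linarith [Nat.le_ceil M])
        have : N s < ⌈M⌉₊ + 1 := by exact_mod_cast this
        omega
      exact Set.mem_insert_iff.mpr (Or.inr (hTmono _ _ hNsK (hNspec s)))
    -- length bound
    have hlen : ∀ x ∈ l', 1 ≤ w x := fun x hx => hwge x (hl'mem x hx).1
    have hlenle : (l'.length : ℝ) ≤ W l := by
      rw [← hl'W]
      exact length_le_wsum w l' hlen
    have hlenK : l'.length ≤ K := by
      have h1 : (l'.length : ℝ) < M + 1 := lt_of_le_of_lt hlenle hrM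
      have h2 : (l'.length : ℝ) < (K : ℝ) + 1 := by
        have := Nat.le_ceil M
        push_cast [hKdef]
        push_cast at this
        linarith
      have : l'.length < K + 1 := by exact_mod_cast h2
      omega
    have := list_prod_mem_pow A l' hletters
    rw [hl'prod] at this
    exact Set.pow_subset_pow_right hA1 hlenK this
  -- exponential moments
  · intro γ hγ
    set B : ℝ := ∑' i, b i with hBdef
    have hB0 : 0 ≤ B := tsum_nonneg hbnn
    have hBle : ∀ t : Finset Λ, ∑ i ∈ t, b i ≤ B :=
      fun t => Summable.sum_le_tsum t (fun i _ => hbnn i) hbsum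
    set D' : ℕ → ℝ := fun n =>
      (if n = 0 then B else Real.exp (-(n : ℝ) ^ 2)) * Real.exp (γ * ((n : ℝ) + 1))
      with hD'def
    have hD'nn : ∀ n, 0 ≤ D' n := by
      intro n
      apply mul_nonneg _ (Real.exp_nonneg _)
      split
      · exact hB0
      · exact Real.exp_nonneg _
    have hD'sum : Summable D' := by
      set c : ℝ := γ + (γ + 1) ^ 2 / 4 with hcdef
      have hif : ∀ n : ℕ, (if n = 0 then B else Real.exp (-(n : ℝ) ^ 2))
          ≤ (B + 1) * Real.exp (-(n : ℝ) ^ 2) := by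
        intro n
        by_cases h : n = 0
        · subst h
          simp only [if_pos rfl]
          push_cast
          norm_num
        · simp only [if_neg h]
          nlinarith [Real.exp_pos (-(n : ℝ) ^ 2), hB0]
      have hmaj : ∀ n : ℕ, D' n ≤ (B + 1) * (Real.exp c * Real.exp ((n : ℝ) * (-1))) := by
        intro n
        calc D' n = (if n = 0 then B else Real.exp (-(n : ℝ) ^ 2))
              * Real.exp (γ * ((n : ℝ) + 1)) := rfl
          _ ≤ ((B + 1) * Real.exp (-(n : ℝ) ^ 2)) * Real.exp (γ * ((n : ℝ) + 1)) :=
              mul_le_mul_of_nonneg_right (hif n) (Real.exp_nonneg _)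
          _ = (B + 1) * Real.exp (-(n : ℝ) ^ 2 + γ * ((n : ℝ) + 1)) := by
              rw [mul_assoc, ← Real.exp_add]
          _ ≤ (B + 1) * Real.exp (c + (n : ℝ) * (-1)) := by
              apply mul_le_mul_of_nonneg_left _ (by linarith)
              apply Real.exp_le_exp.mpr
              rw [hcdef]
              nlinarith [sq_nonneg ((n : ℝ) - (γ + 1) / 2)]
          _ = (B + 1) * (Real.exp c * Real.exp ((n : ℝ) * (-1))) := by rw [Real.exp_add]
      have hgeom : Summable (fun n : ℕ => Real.exp ((n : ℝ) * (-1))) :=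
        Real.summable_exp_nat_mul_iff.mpr (by norm_num)
      exact Summable.of_nonneg_of_le hD'nn hmaj ((hgeom.mul_left (Real.exp c)).mul_left (B + 1))
    set C : ℝ := ∑' n, D' n with hCdef
    -- summability of the dominating series over Λ
    set g : Λ → ℝ := fun i => b i * Real.exp (γ * w i) with hgdef
    have hgnn : ∀ i, 0 ≤ g i := fun i => mul_nonneg (hbnn i) (Real.exp_nonneg _)
    have hg1 : g 1 = 0 := by simp [hgdef, hb1]
    have hgsum : Summable g := by
      apply summable_of_sum_le (fun i => hgnn i)
      intro u
      have herase : ∑ i ∈ u, g i = ∑ i ∈ u.erase 1, g i :=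
        (Finset.sum_erase u hg1).symm
      rw [herase]
      set u' : Finset Λ := u.erase 1 with hu'def
      have hu'ne1 : ∀ i ∈ u', i ≠ 1 := fun i hi => Finset.ne_of_mem_erase hi
      set m : ℕ := u'.sup N with hmdef
      have hmaps : ∀ i ∈ u', N i ∈ Finset.range (m + 1) := by
        intro i hi
        exact Finset.mem_range.mpr (Nat.lt_succ_of_le (Finset.le_sup hi))
      rw [← Finset.sum_fiberwise_of_maps_to hmaps g]
      have hfiber : ∀ n ∈ Finset.range (m + 1),
          ∑ i ∈ u'.filter (fun i => N i = n), g i ≤ D' n := by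
        intro n _
        set v : Finset Λ := u'.filter (fun i => N i = n) with hvdef
        have hveq : ∀ i ∈ v, g i = b i * Real.exp (γ * ((n : ℝ) + 1)) := by
          intro i hi
          rw [hvdef, Finset.mem_filter] at hi
          have hi1 : i ≠ 1 := hu'ne1 i hi.1
          have : w i = (n : ℝ) + 1 := by
            simp only [hwdef, if_neg hi1, hi.2]
          rw [hgdef]
          simp only
          rw [this]
        rw [Finset.sum_congr rfl hveq, ← Finset.sum_mul]
        have hbv : ∑ i ∈ v, b i ≤ (if n = 0 then B else Real.exp (-(n : ℝ) ^ 2)) := by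
          rcases Nat.eq_zero_or_pos n with rfl | hn
          · simp only [if_pos rfl]
            exact hBle v
          · have hn0 : n ≠ 0 := Nat.pos_iff_ne_zero.mp hn
            simp only [if_neg hn0]
            have hdisj : Disjoint v (T (n - 1)) := by
              rw [Finset.disjoint_left]
              intro i hi hiT
              rw [hvdef, Finset.mem_filter] at hi
              exact hNmin i (n - 1) (by omega) hiT
            have := hTtail (n - 1) v hdisj
            have hcast : ((n - 1 : ℕ) : ℝ) + 1 = (n : ℝ) := by
              have : (1 : ℕ) ≤ n := hn
              push_cast [Nat.cast_sub this]
              ring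
            rwa [hcast] at this
        calc (∑ i ∈ v, b i) * Real.exp (γ * ((n : ℝ) + 1))
            ≤ (if n = 0 then B else Real.exp (-(n : ℝ) ^ 2)) * Real.exp (γ * ((n : ℝ) + 1)) :=
              mul_le_mul_of_nonneg_right hbv (Real.exp_nonneg _)
          _ = D' n := rfl
      calc ∑ n ∈ Finset.range (m + 1), ∑ i ∈ u'.filter (fun i => N i = n), g i
          ≤ ∑ n ∈ Finset.range (m + 1), D' n := Finset.sum_le_sum hfiber
        _ ≤ C := Summable.sum_le_tsum _ (fun n _ => hD'nn n) hD'sum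
    -- compare
    apply Summable.of_nonneg_of_le
      (fun i => mul_nonneg (hnn 1 i) (Real.exp_nonneg _)) _ hgsum
    intro i
    show a 1 i * Real.exp (γ * D (1⁻¹ * i)) ≤ g i
    have hd : D (1⁻¹ * i) ≤ w i := by
      have h1 : D i ≤ W [i] := hDle i [i] (by simp)
      have h2 : W [i] = w i := by simp [hWdef]
      simp only [inv_one, one_mul]
      linarith [h1, h2.le, h2.ge]
    have hexp : Real.exp (γ * D (1⁻¹ * i)) ≤ Real.exp (γ * w i) :=
      Real.exp_le_exp.mpr (mul_le_mul_of_nonneg_left hd hγ)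
    calc a 1 i * Real.exp (γ * D (1⁻¹ * i))
        ≤ b i * Real.exp (γ * w i) :=
          mul_le_mul (hble i) hexp (Real.exp_nonneg _) (hbnn i)
      _ = g i := rfl
end

section
/- Let Λ be countable and μ a measure on 𝒫₊(Λ) (nonempty subsets of Λ with the product topology). Then μ is locally finite (finite on compact sets) if and only if μ({A : i ∈ A}) < ∞ for every i ∈ Λ, and this in turn holds if and only if μ({A : A ∩ B ≠ ∅}) < ∞ for every finite nonempty B ⊆ Λ. -/
open MeasureTheory

lemma stmt9_compact {Λ : Type*} (i : Λ) :
    IsCompact {χ : {χ : Λ → Bool // ∃ i, χ i = true} | χ.1 i = true} := by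
  rw [Topology.IsEmbedding.subtypeVal.isCompact_iff]
  have himg : Subtype.val '' {χ : {χ : Λ → Bool // ∃ i, χ i = true} | χ.1 i = true}
      = {g : Λ → Bool | g i = true} := by
    ext g
    constructor
    · rintro ⟨⟨g, hg⟩, h, rfl⟩; exact h
    · intro hg; exact ⟨⟨g, ⟨i, hg⟩⟩, hg, rfl⟩
  rw [himg]
  have hclosed : IsClosed {g : Λ → Bool | g i = true} := by
    have : {g : Λ → Bool | g i = true} = (fun g : Λ → Bool => g i) ⁻¹' {true} := by
      ext g; simp
    rw [this]
    exact IsClosed.preimage (continuous_apply i) isClosed_singleton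
  exact hclosed.isCompact

lemma stmt9_open {Λ : Type*} (i : Λ) :
    IsOpen {χ : {χ : Λ → Bool // ∃ i, χ i = true} | χ.1 i = true} := by
  have : {χ : {χ : Λ → Bool // ∃ i, χ i = true} | χ.1 i = true}
      = (fun χ : {χ : Λ → Bool // ∃ i, χ i = true} => χ.1 i) ⁻¹' {true} := by
    ext χ; simp
  rw [this]
  exact IsOpen.preimage ((continuous_apply i).comp continuous_subtype_val)
    (isOpen_discrete _)

/-- Characterization of locally finite measures on the space `𝒫₊` of nonempty
configurations: `μ` is locally finite iff `μ({A : i ∈ A}) < ∞` for every site `i`,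
iff `μ({A : A ∩ B ≠ ∅}) < ∞` for every finite nonempty `B`. -/
theorem stmt9 {Λ : Type*} [Countable Λ]
    (μ : Measure {χ : Λ → Bool // ∃ i, χ i = true}) :
    (IsLocallyFiniteMeasure μ ↔ ∀ i : Λ, μ {χ | χ.1 i = true} < ⊤) ∧
    (IsLocallyFiniteMeasure μ ↔
      ∀ B : Finset Λ, B.Nonempty → μ {χ | ∃ i ∈ B, χ.1 i = true} < ⊤) := by
  have key : IsLocallyFiniteMeasure μ ↔ ∀ i : Λ, μ {χ | χ.1 i = true} < ⊤ := by
    constructor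
    · intro h i
      exact (stmt9_compact i).measure_lt_top
    · intro h
      constructor
      intro x
      obtain ⟨i, hi⟩ := x.2
      exact ⟨{χ | χ.1 i = true}, (stmt9_open i).mem_nhds hi, h i⟩
  refine ⟨key, key.trans ?_⟩
  constructor
  · intro h B hB
    have hsub : {χ : {χ : Λ → Bool // ∃ i, χ i = true} | ∃ i ∈ B, χ.1 i = true}
        = ⋃ i ∈ B, {χ | χ.1 i = true} := by
      ext χ; simp
    rw [hsub]
    refine lt_of_le_of_lt (measure_biUnion_finset_le B _) ?_
    exact ENNReal.sum_lt_top.mpr fun i _ => h i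
  · intro h i
    refine lt_of_le_of_lt (measure_mono ?_) (h {i} (Finset.singleton_nonempty i))
    intro χ hχ
    exact ⟨i, Finset.mem_singleton_self i, hχ⟩
end

section
/- Let Λ be a countable group and μ a homogeneous (left-translation-invariant) measure on the finite nonempty subsets of Λ, obtained as μ = c ∑_{i∈Λ} P[iΔ ∈ ·] for a constant c > 0 and a random finite nonempty set Δ ⊆ Λ. If ν is a homogeneous locally finite measure on 𝒫₊ concentrated on finite nonempty sets, then h_ν(A) ≥ ⟨⟨ν⟩⟩ · |A| for all finite nonempty A, where ⟨⟨ν⟩⟩ := ∫ ν(dB) |B|^{-1} 1_{e ∈ B} and h_ν(A) := ν({B : A ∩ B ≠ ∅}). -/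
open MeasureTheory
open scoped ENNReal Classical

section Aux
variable {Λ : Type*} [Countable Λ]

/-- The function `B ↦ 1_{i∈B, B finite} |B|⁻¹` is measurable. -/
lemma meas_g (i : Λ) :
    Measurable (fun B : Set Λ => (if i ∈ B ∧ B.Finite then ((B.ncard : ℝ≥0∞))⁻¹ else 0)) := by
  have hrepr : (fun B : Set Λ => (if i ∈ B ∧ B.Finite then ((B.ncard : ℝ≥0∞))⁻¹ else 0))
      = fun B : Set Λ => ∑' F : Finset Λ,
        Set.indicator {(↑F : Set Λ)} (fun _ => if i ∈ F then ((F.card : ℝ≥0∞))⁻¹ else 0) B := by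
    funext B
    by_cases hB : B.Finite
    · have hkey : ∀ G : Finset Λ, G ≠ hB.toFinset →
          Set.indicator {(↑G : Set Λ)} (fun _ => if i ∈ G then ((G.card : ℝ≥0∞))⁻¹ else 0) B = 0 := by
        intro G hG
        apply Set.indicator_of_notMem
        intro hmem
        apply hG
        have hBG : B = ↑G := Set.mem_singleton_iff.mp hmem
        ext x
        simp [Set.Finite.mem_toFinset, hBG]
      rw [tsum_eq_single hB.toFinset (fun G hG => hkey G hG)]
      have hBF : B = ↑hB.toFinset := by simp
      rw [Set.indicator_of_mem (Set.mem_singleton_iff.mpr hBF)]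
      have h1 : i ∈ hB.toFinset ↔ i ∈ B := by simp
      have h2 : hB.toFinset.card = B.ncard := by
        rw [← Set.ncard_coe_finset, Set.Finite.coe_toFinset]
      by_cases hi : i ∈ B
      · simp [hi, hB, h1.mpr hi, h2]
      · simp [hi, fun h => hi (h1.mp h)]
    · have hz : ∀ F : Finset Λ,
          Set.indicator {(↑F : Set Λ)} (fun _ => if i ∈ F then ((F.card : ℝ≥0∞))⁻¹ else 0) B = 0 := by
        intro F
        apply Set.indicator_of_notMem
        intro hmem
        exact hB (by rw [Set.mem_singleton_iff.mp hmem]; exact F.finite_toSet)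
      rw [tsum_congr hz]
      simp [hB]
  rw [hrepr]
  exact Measurable.ennreal_tsum fun F =>
    Measurable.indicator measurable_const (measurableSet_singleton (↑F : Set Λ))

end Aux

/-- Lower bound in the linear-bounds lemma: if `ν` is a homogeneous, locally finite
measure on the nonempty configurations that is concentrated on finite nonempty sets,
then `h_ν(A) ≥ ⟨⟨ν⟩⟩·|A|` for every finite nonempty `A`, where
`⟨⟨ν⟩⟩ = ∫ ν(dB) |B|⁻¹ 1_{e ∈ B}` (with `|B|⁻¹ := 0` for infinite `B`). -/
theorem stmt12 {Λ : Type*} [Group Λ] [Countable Λ]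
    (ν : Measure (Set Λ))
    (hfin : ∀ i : Λ, ν {B : Set Λ | i ∈ B} < ⊤)
    (hhom : ∀ i : Λ, ν.map (fun B : Set Λ => (i * ·) '' B) = ν)
    (hconc : ν {B : Set Λ | ¬ (B.Finite ∧ B.Nonempty)} = 0) :
    ∀ A : Finset Λ, A.Nonempty →
      (A.card : ℝ≥0∞) *
          (∫⁻ B, (if (1 : Λ) ∈ B ∧ B.Finite then ((B.ncard : ℝ≥0∞))⁻¹ else 0) ∂ν)
        ≤ ν {B : Set Λ | ((A : Set Λ) ∩ B).Nonempty} := by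
  intro A hA
  set g : Λ → Set Λ → ℝ≥0∞ :=
    fun i B => if i ∈ B ∧ B.Finite then ((B.ncard : ℝ≥0∞))⁻¹ else 0 with hg
  -- translation map is measurable
  have hT : ∀ j : Λ, Measurable (fun B : Set Λ => (j * ·) '' B) := by
    intro j
    rw [measurable_set_iff]
    intro a
    have hrw : (fun B : Set Λ => a ∈ (j * ·) '' B) = fun B : Set Λ => j⁻¹ * a ∈ B := by
      funext B
      simp only [Set.mem_image, eq_iff_iff]
      constructor
      · rintro ⟨x, hx, rfl⟩; simpa using hx
      · intro h; exact ⟨j⁻¹ * a, h, by group⟩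
    rw [hrw]
    exact measurable_set_mem _
  -- invariance of the integral
  have hint : ∀ i : Λ, ∫⁻ B, g i B ∂ν = ∫⁻ B, g 1 B ∂ν := by
    intro i
    conv_rhs => rw [← hhom i⁻¹]
    rw [lintegral_map (meas_g 1) (hT i⁻¹)]
    congr 1
    funext B
    have hmem : (1 : Λ) ∈ (i⁻¹ * ·) '' B ↔ i ∈ B := by
      constructor
      · rintro ⟨x, hx, hx1⟩
        have hxi : x = i := (inv_mul_eq_one.mp hx1).symm
        rwa [← hxi]
      · intro h; exact ⟨i, h, by group⟩
    have hfin' : ((i⁻¹ * ·) '' B).Finite ↔ B.Finite :=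
      Set.finite_image_iff ((mul_right_injective i⁻¹).injOn)
    have hcard : ((i⁻¹ * ·) '' B).ncard = B.ncard :=
      Set.ncard_image_of_injective B (mul_right_injective i⁻¹)
    simp only [hg, hmem, hfin', hcard]
  -- rewrite LHS as a finite sum and exchange with the integral
  have hsum : (A.card : ℝ≥0∞) * (∫⁻ B, g 1 B ∂ν) = ∫⁻ B, ∑ i ∈ A, g i B ∂ν := by
    rw [lintegral_finset_sum _ (fun i _ => meas_g i)]
    rw [Finset.sum_congr rfl (fun i _ => hint i), Finset.sum_const, nsmul_eq_mul]
  show (A.card : ℝ≥0∞) * (∫⁻ B, g 1 B ∂ν) ≤ _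
  rw [hsum]
  -- pointwise bound by the indicator of the hitting event
  have hS : MeasurableSet {B : Set Λ | ((A : Set Λ) ∩ B).Nonempty} := by
    have hrw : {B : Set Λ | ((A : Set Λ) ∩ B).Nonempty} = ⋃ i ∈ A, {B : Set Λ | i ∈ B} := by
      ext B
      simp [Set.inter_nonempty_iff_exists_left]
    rw [hrw]
    exact MeasurableSet.biUnion A.countable_toSet (fun i _ => measurableSet_mem i)
  calc ∫⁻ B, ∑ i ∈ A, g i B ∂ν
      ≤ ∫⁻ B, Set.indicator {B : Set Λ | ((A : Set Λ) ∩ B).Nonempty} (fun _ => 1) B ∂ν := by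
        apply lintegral_mono
        intro B
        by_cases hne : ((A : Set Λ) ∩ B).Nonempty
        · rw [Set.indicator_of_mem (show B ∈ {B : Set Λ | ((A : Set Λ) ∩ B).Nonempty} from hne)]
          by_cases hBf : B.Finite
          · have hrw : ∀ i ∈ A, g i B = if i ∈ B then ((B.ncard : ℝ≥0∞))⁻¹ else 0 := by
              intro i _
              simp [hg, hBf]
            have hfilter : ∑ i ∈ A, (if i ∈ B then ((B.ncard : ℝ≥0∞))⁻¹ else 0)
                = ((A.filter (· ∈ B)).card : ℝ≥0∞) * ((B.ncard : ℝ≥0∞))⁻¹ := by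
              rw [← Finset.sum_filter, Finset.sum_const, nsmul_eq_mul]
            have hle : (A.filter (· ∈ B)).card ≤ B.ncard := by
              rw [← Set.ncard_coe_finset]
              refine Set.ncard_le_ncard ?_ hBf
              intro x hx
              simp only [Finset.coe_filter, Set.mem_setOf_eq] at hx
              exact hx.2
            have hpos : B.ncard ≠ 0 := by
              obtain ⟨x, hx⟩ := hne
              exact ((Set.ncard_pos hBf).mpr ⟨x, hx.2⟩).ne'
            show ∑ i ∈ A, g i B ≤ 1
            rw [Finset.sum_congr rfl hrw, hfilter]
            calc ((A.filter (· ∈ B)).card : ℝ≥0∞) * ((B.ncard : ℝ≥0∞))⁻¹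
                ≤ (B.ncard : ℝ≥0∞) * ((B.ncard : ℝ≥0∞))⁻¹ :=
                  mul_le_mul_left (by exact_mod_cast hle) _
              _ = 1 := ENNReal.mul_inv_cancel (by exact_mod_cast hpos) (by simp)
          · have hz : ∀ i ∈ A, g i B = 0 := by intro i _; simp [hg, hBf]
            simp [Finset.sum_congr rfl hz]
        · have hz : ∀ i ∈ A, g i B = 0 := by
            intro i hi
            have hib : i ∉ B := fun h => hne ⟨i, by simp [hi], h⟩
            simp [hg, hib]
          rw [Set.indicator_of_notMem (show B ∉ {B : Set Λ | ((A : Set Λ) ∩ B).Nonempty} from hne)]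
          simp [Finset.sum_congr rfl hz]
    _ = ν {B : Set Λ | ((A : Set Λ) ∩ B).Nonempty} := by
        rw [lintegral_indicator_const hS, one_mul]
end

section
/- Let Λ be a countable group and Δ a random finite nonempty subset of Λ with E[|Δ|] < ∞, and c > 0. Then μ := c ∑_{i∈Λ} P[iΔ ∈ ·] is a nonzero left-translation-invariant measure on the finite nonempty subsets of Λ satisfying ⟨⟨μ⟩⟩ := ∫ μ(dA) |A|^{-1} 1_{e∈A} = c, and μ({A : e ∈ A}) = c · E[|Δ|] < ∞. -/
open scoped ENNReal Classical

lemma stmt13_aux {Λ : Type*} [Group Λ] [DecidableEq Λ]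
    (p : Finset Λ → ℝ≥0∞) (g : Finset Λ → ℝ≥0∞)
    (hg : ∀ (i : Λ) (A : Finset Λ), g (A.image (i * ·)) = g A) :
    ∑' A : Finset Λ, ∑' i : Λ, (if (1 : Λ) ∈ A then g A * p (A.image (i * ·)) else 0)
      = ∑' B : Finset Λ, (B.card : ℝ≥0∞) * (g B * p B) := by
  rw [ENNReal.tsum_comm]
  have h1 : ∀ i : Λ,
      (∑' A : Finset Λ, (if (1 : Λ) ∈ A then g A * p (A.image (i * ·)) else 0))
        = ∑' B : Finset Λ, (if i ∈ B then g B * p B else 0) := by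
    intro i
    set σ : Finset Λ ≃ Finset Λ := (Equiv.mulLeft i).finsetCongr with hσ
    have key : ∀ B : Finset Λ,
        (if (1 : Λ) ∈ σ.symm B then g (σ.symm B) * p ((σ.symm B).image (i * ·)) else 0)
          = (if i ∈ B then g B * p B else 0) := by
      intro B
      have hsymm : σ.symm B = B.image (i⁻¹ * ·) := by
        simp [hσ, Equiv.finsetCongr_symm, Equiv.finsetCongr_apply, Finset.map_eq_image]
      have hmem : (1 : Λ) ∈ σ.symm B ↔ i ∈ B := by
        rw [hsymm]
        simp [Finset.mem_image, eq_comm, inv_mul_eq_one]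
      have hB : (σ.symm B).image (i * ·) = B := by
        rw [hsymm, Finset.image_image]
        have : ((i * ·) ∘ (i⁻¹ * ·)) = id := by
          funext x; simp
        rw [this, Finset.image_id]
      have hgB : g (σ.symm B) = g B := by rw [hsymm, hg]
      simp only [hmem, hB, hgB]
    calc ∑' A : Finset Λ, (if (1 : Λ) ∈ A then g A * p (A.image (i * ·)) else 0)
        = ∑' B : Finset Λ,
            (if (1 : Λ) ∈ σ.symm B then g (σ.symm B) * p ((σ.symm B).image (i * ·)) else 0) := by
          exact (σ.symm.tsum_eq _).symm
      _ = ∑' B : Finset Λ, (if i ∈ B then g B * p B else 0) := tsum_congr key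
  calc ∑' (i : Λ) (A : Finset Λ), (if (1 : Λ) ∈ A then g A * p (A.image (i * ·)) else 0)
      = ∑' (i : Λ) (B : Finset Λ), (if i ∈ B then g B * p B else 0) := tsum_congr h1
    _ = ∑' (B : Finset Λ) (i : Λ), (if i ∈ B then g B * p B else 0) := ENNReal.tsum_comm
    _ = ∑' B : Finset Λ, (B.card : ℝ≥0∞) * (g B * p B) := by
        refine tsum_congr fun B => ?_
        rw [tsum_eq_sum (s := B) (fun i hi => by simp [hi])]
        simp [Finset.sum_ite_mem, Finset.sum_const, nsmul_eq_mul]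

/-- If `Δ` is a random finite nonempty subset of a countable group `Λ` with
distribution `p` and `E[|Δ|] < ∞`, and `c > 0`, then
`μ(A) := c ∑_{i∈Λ} P[iΔ = A]` defines a nonzero left-translation-invariant measure
on the finite nonempty subsets of `Λ` with `⟨⟨μ⟩⟩ = c` and
`μ({A : e ∈ A}) = c · E[|Δ|] < ∞`. -/
theorem stmt13 {Λ : Type*} [Group Λ] [Countable Λ] [DecidableEq Λ]
    (p : Finset Λ → ℝ≥0∞)
    (hprob : ∑' A : Finset Λ, p A = 1)
    (hne : ∀ A : Finset Λ, p A ≠ 0 → A.Nonempty)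
    (hmom : ∑' A : Finset Λ, (A.card : ℝ≥0∞) * p A < ⊤)
    (c : ℝ≥0∞) (hc : 0 < c) (hc' : c ≠ ⊤)
    (μ : Finset Λ → ℝ≥0∞)
    (hμ : ∀ A : Finset Λ, μ A = c * ∑' i : Λ, p (A.image (i * ·))) :
    (∃ A : Finset Λ, μ A ≠ 0) ∧
    (∀ A : Finset Λ, μ A ≠ 0 → A.Nonempty) ∧
    (∀ (j : Λ) (A : Finset Λ), μ (A.image (j * ·)) = μ A) ∧
    (∑' A : Finset Λ, (if (1 : Λ) ∈ A then ((A.card : ℝ≥0∞))⁻¹ * μ A else 0) = c) ∧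
    (∑' A : Finset Λ, (if (1 : Λ) ∈ A then μ A else 0)
        = c * ∑' A : Finset Λ, (A.card : ℝ≥0∞) * p A) ∧
    (∑' A : Finset Λ, (if (1 : Λ) ∈ A then μ A else 0) < ⊤) := by
  -- general reduction lemma: for translation-invariant weight g,
  have main : ∀ g : Finset Λ → ℝ≥0∞, (∀ (i : Λ) (A : Finset Λ), g (A.image (i * ·)) = g A) →
      (∑' A : Finset Λ, (if (1 : Λ) ∈ A then g A * μ A else 0))
        = c * ∑' B : Finset Λ, (B.card : ℝ≥0∞) * (g B * p B) := by
    intro g hg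
    rw [← stmt13_aux p g hg, ← ENNReal.tsum_mul_left]
    refine tsum_congr fun A => ?_
    by_cases h : (1 : Λ) ∈ A
    · simp only [h, if_true]
      rw [hμ A, ENNReal.tsum_mul_left]
      ring
    · simp [h]
  have hginv : ∀ (i : Λ) (A : Finset Λ),
      (((A.image (i * ·)).card : ℝ≥0∞))⁻¹ = ((A.card : ℝ≥0∞))⁻¹ := by
    intro i A
    rw [Finset.card_image_of_injective _ (mul_right_injective i)]
  refine ⟨?_, ?_, ?_, ?_, ?_, ?_⟩
  · -- nonzero
    obtain ⟨A₀, hA₀⟩ : ∃ A : Finset Λ, p A ≠ 0 := by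
      by_contra h
      push_neg at h
      simp [h] at hprob
    refine ⟨A₀, ?_⟩
    rw [hμ A₀]
    have hle : p A₀ ≤ ∑' i : Λ, p (A₀.image (i * ·)) := by
      have h := ENNReal.le_tsum (a := (1 : Λ)) (f := fun i : Λ => p (A₀.image (i * ·)))
      simpa using h
    intro h
    rcases mul_eq_zero.1 h with h' | h'
    · exact hc.ne' h'
    · exact hA₀ (le_antisymm (h' ▸ hle) zero_le)
  · -- support on nonempty
    intro A hA
    rw [Finset.nonempty_iff_ne_empty]
    rintro rfl
    apply hA
    rw [hμ]
    have h0 : p (∅ : Finset Λ) = 0 := by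
      by_contra h
      exact Finset.not_nonempty_empty (hne _ h)
    simp [h0]
  · -- invariance
    intro j A
    rw [hμ, hμ]
    congr 1
    have himg : ∀ i : Λ, (A.image (j * ·)).image (i * ·) = A.image ((i * j) * ·) := by
      intro i
      rw [Finset.image_image]
      congr 1
      funext x
      simp [mul_assoc]
    calc ∑' i : Λ, p ((A.image (j * ·)).image (i * ·))
        = ∑' i : Λ, p (A.image ((i * j) * ·)) := tsum_congr fun i => by rw [himg]
      _ = ∑' i : Λ, p (A.image (i * ·)) := by
          exact (Equiv.mulRight j).tsum_eq fun i => p (A.image (i * ·))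
  · -- ⟨⟨μ⟩⟩ = c
    rw [main (fun A => ((A.card : ℝ≥0∞))⁻¹) hginv]
    have : ∀ B : Finset Λ, (B.card : ℝ≥0∞) * (((B.card : ℝ≥0∞))⁻¹ * p B) = p B := by
      intro B
      by_cases h : p B = 0
      · simp [h]
      · have hBne := hne B h
        have hcard : (B.card : ℝ≥0∞) ≠ 0 := by
          simp [Finset.card_ne_zero_of_mem hBne.choose_spec]
        rw [← mul_assoc, ENNReal.mul_inv_cancel hcard (ENNReal.natCast_ne_top _), one_mul]
    rw [tsum_congr this, hprob, mul_one]
  · -- second moment identity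
    have := main (fun _ => 1) (fun _ _ => rfl)
    simpa using this
  · -- finiteness
    have h5 := main (fun _ => 1) (fun _ _ => rfl)
    simp only [one_mul] at h5
    rw [h5]
    exact ENNReal.mul_lt_top hc'.lt_top hmom
end

section
/- Let Λ be a countable group and let μ, ν be homogeneous locally finite measures on 𝒫₊(Λ), with μ concentrated on finite nonempty sets. Then ⟨⟨μ ∩⊗ ν⟩⟩ = ⟨⟨h_ν · μ⟩⟩, where ⟨⟨κ⟩⟩ := ∫ κ(dA) |A|^{-1} 1_{e∈A}, h_ν(A) := ν({B : A ∩ B ≠ ∅}), and h_ν·μ is the measure with density h_ν with respect to μ. -/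
open MeasureTheory
open scoped ENNReal Classical

/-- An `ℝ≥0∞`-valued function vanishing outside a countable set is measurable
(when singletons are measurable). -/
lemma meas_of_countable_support {α : Type*} [MeasurableSpace α] [MeasurableSingletonClass α]
    {s : Set α} (hs : s.Countable) (f : α → ℝ≥0∞) (hf : ∀ a ∉ s, f a = 0) :
    Measurable f := by
  intro t ht
  by_cases h0 : (0 : ℝ≥0∞) ∈ t
  · have : f ⁻¹' t = (f ⁻¹' t ∩ s) ∪ sᶜ := by
      ext a
      by_cases ha : a ∈ s
      · simp [ha]
      · simp [ha, hf a ha, h0]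
    rw [this]
    exact ((hs.mono Set.inter_subset_right).measurableSet).union hs.measurableSet.compl
  · have : f ⁻¹' t ⊆ s := by
      intro a ha
      by_contra h
      rw [Set.mem_preimage, hf a h] at ha
      exact h0 ha
    exact ((hs.mono this).measurableSet)

lemma measurable_inter_pair {α : Type*} [Countable α] :
    Measurable (fun p : Set α × Set α => p.1 ∩ p.2) := by
  rw [measurable_set_iff]
  intro a
  simp only [Set.mem_inter_iff]
  exact ((measurable_set_mem a).comp measurable_fst).and
    ((measurable_set_mem a).comp measurable_snd)

lemma measurable_image_mul {Λ : Type*} [Group Λ] [Countable Λ] (i : Λ) :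
    Measurable (fun A : Set Λ => (i * ·) '' A) := by
  rw [measurable_set_iff]
  intro a
  have : ∀ A : Set Λ, (a ∈ (i * ·) '' A) = (i⁻¹ * a ∈ A) := by
    intro A
    simp only [eq_iff_iff, Set.mem_image]
    constructor
    · rintro ⟨x, hx, rfl⟩; simpa using hx
    · intro h; exact ⟨i⁻¹ * a, h, by simp⟩
  simp only [this]
  exact measurable_set_mem _

/-- For homogeneous locally finite measures `μ, ν` on the nonempty configurations of a
countable group, with `μ` concentrated on finite nonempty sets,
`⟨⟨μ ∩⊗ ν⟩⟩ = ⟨⟨h_ν · μ⟩⟩`, where `⟨⟨κ⟩⟩ = ∫ κ(dA) |A|⁻¹ 1_{e∈A}` (with `|A|⁻¹ := 0`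
for infinite `A`) and `h_ν(A) = ν({B : A ∩ B ≠ ∅})`. -/
theorem stmt15 {Λ : Type*} [Group Λ] [Countable Λ]
    (μ ν : Measure (Set Λ))
    (hμfin : ∀ i : Λ, μ {A : Set Λ | i ∈ A} < ⊤)
    (hνfin : ∀ i : Λ, ν {B : Set Λ | i ∈ B} < ⊤)
    (hμhom : ∀ i : Λ, μ.map (fun A : Set Λ => (i * ·) '' A) = μ)
    (hνhom : ∀ i : Λ, ν.map (fun B : Set Λ => (i * ·) '' B) = ν)
    (hμconc : μ {A : Set Λ | ¬ (A.Finite ∧ A.Nonempty)} = 0)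
    (hνempty : ν {(∅ : Set Λ)} = 0) :
    (∫⁻ C, (if (1 : Λ) ∈ C ∧ C.Finite then ((C.ncard : ℝ≥0∞))⁻¹ else 0)
        ∂((μ.prod ν).map (fun p : Set Λ × Set Λ => p.1 ∩ p.2)))
      = ∫⁻ A, (if (1 : Λ) ∈ A ∧ A.Finite
          then ((A.ncard : ℝ≥0∞))⁻¹ * ν {B : Set Λ | (A ∩ B).Nonempty} else 0) ∂μ := by
  classical
  -- the weight functions
  set g : Λ → Set Λ → ℝ≥0∞ :=
    fun j C => if j ∈ C ∧ C.Finite then ((C.ncard : ℝ≥0∞))⁻¹ else 0 with hgdef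
  have hScount : {C : Set Λ | C.Finite}.Countable := Set.Countable.setOf_finite
  have hg : ∀ j, Measurable (g j) := by
    intro j
    refine meas_of_countable_support hScount _ ?_
    intro C hC
    simp only [hgdef, if_neg (fun h : j ∈ C ∧ C.Finite => hC h.2)]
  -- sigma-finiteness
  have hμsf : SigmaFinite μ := by
    refine Measure.sigmaFinite_of_countable
      (S := insert {A : Set Λ | ¬ (A.Finite ∧ A.Nonempty)}
        (Set.range fun i : Λ => {A : Set Λ | i ∈ A})) ?_ ?_ ?_
    · exact (Set.countable_range _).insert _
    · rintro s (rfl | ⟨i, rfl⟩)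
      · rw [hμconc]; exact ENNReal.zero_lt_top
      · exact hμfin i
    · apply Set.eq_univ_of_forall
      intro A
      by_cases hA : A.Finite ∧ A.Nonempty
      · obtain ⟨i, hi⟩ := hA.2
        exact Set.mem_sUnion.2 ⟨_, Set.mem_insert_of_mem _ ⟨i, rfl⟩, hi⟩
      · exact Set.mem_sUnion.2 ⟨_, Set.mem_insert _ _, hA⟩
  have hνsf : SigmaFinite ν := by
    refine Measure.sigmaFinite_of_countable
      (S := insert {({} : Set Λ)} (Set.range fun i : Λ => {B : Set Λ | i ∈ B})) ?_ ?_ ?_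
    · exact (Set.countable_range _).insert _
    · rintro s (rfl | ⟨i, rfl⟩)
      · rw [hνempty]; exact ENNReal.zero_lt_top
      · exact hνfin i
    · apply Set.eq_univ_of_forall
      intro B
      rcases Set.eq_empty_or_nonempty B with rfl | ⟨i, hi⟩
      · exact Set.mem_sUnion.2 ⟨_, Set.mem_insert _ _, rfl⟩
      · exact Set.mem_sUnion.2 ⟨_, Set.mem_insert_of_mem _ ⟨i, rfl⟩, hi⟩
  -- pointwise: total mass of the weights
  have hsum : ∀ C : Set Λ, ∑' j : Λ, g j C
      = if C.Nonempty ∧ C.Finite then 1 else 0 := by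
    intro C
    by_cases hCfin : C.Finite
    · have h1 : ∀ j : Λ, j ∉ hCfin.toFinset → g j C = 0 := by
        intro j hj
        simp only [Set.Finite.mem_toFinset] at hj
        simp [hgdef, hj]
      rw [tsum_eq_sum h1]
      have h2 : ∀ j ∈ hCfin.toFinset, g j C = ((C.ncard : ℝ≥0∞))⁻¹ := by
        intro j hj
        simp only [Set.Finite.mem_toFinset] at hj
        simp [hgdef, hj, hCfin]
      rw [Finset.sum_congr rfl h2, Finset.sum_const, nsmul_eq_mul]
      rcases Set.eq_empty_or_nonempty C with rfl | hne
      · simp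
      · rw [if_pos ⟨hne, hCfin⟩]
        have hcard : hCfin.toFinset.card = C.ncard := (Set.ncard_eq_toFinset_card C hCfin).symm
        have hn0 : C.ncard ≠ 0 := (Set.ncard_pos hCfin).mpr hne |>.ne'
        rw [hcard]
        exact ENNReal.mul_inv_cancel (by exact_mod_cast hn0) (ENNReal.natCast_ne_top _)
    · have : ∀ j : Λ, g j C = 0 := fun j => by simp [hgdef, hCfin]
      simp [this, hCfin]
  -- pointwise: translation of the weights
  have htrans : ∀ (i j : Λ) (A : Set Λ), g j ((i * ·) '' A) = g (i⁻¹ * j) A := by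
    intro i j A
    have hmem : (j ∈ (i * ·) '' A) ↔ (i⁻¹ * j ∈ A) := by
      simp only [Set.mem_image]
      constructor
      · rintro ⟨x, hx, rfl⟩; simpa using hx
      · intro h; exact ⟨i⁻¹ * j, h, by simp⟩
    have hfin : ((i * ·) '' A).Finite ↔ A.Finite :=
      Set.finite_image_iff ((mul_right_injective i).injOn)
    have hcard : ((i * ·) '' A).ncard = A.ncard :=
      Set.ncard_image_of_injective A (mul_right_injective i)
    simp only [hgdef, hmem, hfin, hcard]
  have hinterim : ∀ (i : Λ) (A B : Set Λ),
      g 1 ((i * ·) '' A ∩ (i * ·) '' B) = g i⁻¹ (A ∩ B) := by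
    intro i A B
    rw [← Set.image_inter (mul_right_injective i), htrans, mul_one]
  -- a.e. finiteness/nonemptiness of the first coordinate
  have haefin : ∀ᵐ p : Set Λ × Set Λ ∂(μ.prod ν), p.1.Finite ∧ p.1.Nonempty := by
    rw [ae_iff]
    have : {p : Set Λ × Set Λ | ¬ (p.1.Finite ∧ p.1.Nonempty)}
        = {A : Set Λ | ¬ (A.Finite ∧ A.Nonempty)} ×ˢ Set.univ := by
      ext p; simp
    rw [this, Measure.prod_prod, hμconc, zero_mul]
  -- measurability helpers on the product
  have hmeasInter := measurable_inter_pair (α := Λ)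
  have hF : ∀ j : Λ, Measurable (fun p : Set Λ × Set Λ => g j (p.1 ∩ p.2)) :=
    fun j => (hg j).comp hmeasInter
  have hNE : Measurable (fun p : Set Λ × Set Λ => if (p.1 ∩ p.2).Nonempty then (1 : ℝ≥0∞) else 0) := by
    have hset : MeasurableSet {p : Set Λ × Set Λ | (p.1 ∩ p.2).Nonempty} := by
      apply measurableSet_setOf.2
      have : (fun p : Set Λ × Set Λ => (p.1 ∩ p.2).Nonempty)
          = fun p => ∃ a : Λ, a ∈ p.1 ∧ a ∈ p.2 := by
        ext p; simp [Set.Nonempty, Set.mem_inter_iff]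
      rw [this]
      exact Measurable.exists fun a =>
        ((measurable_set_mem a).comp measurable_fst).and
          ((measurable_set_mem a).comp measurable_snd)
    exact Measurable.ite hset measurable_const measurable_const
  calc
    (∫⁻ C, g 1 C ∂((μ.prod ν).map (fun p : Set Λ × Set Λ => p.1 ∩ p.2)))
      = ∫⁻ p : Set Λ × Set Λ, g 1 (p.1 ∩ p.2) ∂(μ.prod ν) :=
        lintegral_map (hg 1) hmeasInter
    _ = ∫⁻ p : Set Λ × Set Λ, ∑' i : Λ, g i p.1 * g 1 (p.1 ∩ p.2) ∂(μ.prod ν) := by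
        refine lintegral_congr_ae ?_
        filter_upwards [haefin] with p hp
        rw [ENNReal.tsum_mul_right, hsum, if_pos ⟨hp.2, hp.1⟩, one_mul]
    _ = ∑' i : Λ, ∫⁻ p : Set Λ × Set Λ, g i p.1 * g 1 (p.1 ∩ p.2) ∂(μ.prod ν) :=
        lintegral_tsum fun i =>
          (((hg i).comp measurable_fst).mul (hF 1)).aemeasurable
    _ = ∑' i : Λ, ∫⁻ p : Set Λ × Set Λ, g 1 p.1 * g i⁻¹ (p.1 ∩ p.2) ∂(μ.prod ν) := by
        refine tsum_congr fun i => ?_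
        have hmap : μ.prod ν
            = (μ.prod ν).map (Prod.map (fun A : Set Λ => (i * ·) '' A)
                (fun B : Set Λ => (i * ·) '' B)) := by
          conv_lhs => rw [← hμhom i, ← hνhom i]
          exact Measure.map_prod_map _ _ (measurable_image_mul i) (measurable_image_mul i)
        have hGi : Measurable (fun p : Set Λ × Set Λ => g i p.1 * g 1 (p.1 ∩ p.2)) :=
          ((hg i).comp measurable_fst).mul (hF 1)
        conv_lhs => rw [hmap]
        rw [lintegral_map hGi
          ((measurable_image_mul i).prodMap (measurable_image_mul i))]
        refine lintegral_congr fun p => ?_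
        simp only [Prod.map_fst, Prod.map_snd]
        rw [hinterim i p.1 p.2, htrans i i p.1, inv_mul_cancel]
    _ = ∑' j : Λ, ∫⁻ p : Set Λ × Set Λ, g 1 p.1 * g j (p.1 ∩ p.2) ∂(μ.prod ν) :=
        (Equiv.inv Λ).tsum_eq fun j => ∫⁻ p : Set Λ × Set Λ, g 1 p.1 * g j (p.1 ∩ p.2) ∂(μ.prod ν)
    _ = ∫⁻ p : Set Λ × Set Λ, ∑' j : Λ, g 1 p.1 * g j (p.1 ∩ p.2) ∂(μ.prod ν) :=
        (lintegral_tsum fun j =>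
          (((hg 1).comp measurable_fst).mul (hF j)).aemeasurable).symm
    _ = ∫⁻ p : Set Λ × Set Λ,
          g 1 p.1 * (if (p.1 ∩ p.2).Nonempty then 1 else 0) ∂(μ.prod ν) := by
        refine lintegral_congr fun p => ?_
        rw [ENNReal.tsum_mul_left, hsum]
        by_cases h1 : p.1.Finite
        · by_cases hne : (p.1 ∩ p.2).Nonempty
          · rw [if_pos ⟨hne, h1.inter_of_left _⟩, if_pos hne]
          · rw [if_neg (fun h => hne h.1), if_neg hne]
        · have : g 1 p.1 = 0 := by simp [hgdef, h1]
          simp [this]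
    _ = ∫⁻ A, g 1 A * ν {B : Set Λ | (A ∩ B).Nonempty} ∂μ := by
        have hGm : Measurable (fun p : Set Λ × Set Λ =>
            g 1 p.1 * (if (p.1 ∩ p.2).Nonempty then (1 : ℝ≥0∞) else 0)) :=
          ((hg 1).comp measurable_fst).mul hNE
        rw [lintegral_prod _ hGm.aemeasurable]
        refine lintegral_congr fun A => ?_
        have hsetA : MeasurableSet {B : Set Λ | (A ∩ B).Nonempty} := by
          apply measurableSet_setOf.2
          have : (fun B : Set Λ => (A ∩ B).Nonempty)
              = fun B => ∃ a : Λ, a ∈ A ∧ a ∈ B := by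
            ext B; simp [Set.Nonempty, Set.mem_inter_iff]
          rw [this]
          exact Measurable.exists fun a =>
            (Measurable.and (measurable_const) (measurable_set_mem a))
        show (∫⁻ B, g 1 A * (if (A ∩ B).Nonempty then (1 : ℝ≥0∞) else 0) ∂ν)
          = g 1 A * ν {B : Set Λ | (A ∩ B).Nonempty}
        rw [lintegral_const_mul _ (Measurable.ite hsetA measurable_const measurable_const)]
        congr 1
        have : (fun B : Set Λ => if (A ∩ B).Nonempty then (1 : ℝ≥0∞) else 0)
            = Set.indicator {B : Set Λ | (A ∩ B).Nonempty} (1 : Set Λ → ℝ≥0∞) := by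
          ext B; simp [Set.indicator_apply]
        rw [this, lintegral_indicator_one hsetA]
    _ = ∫⁻ A, (if (1 : Λ) ∈ A ∧ A.Finite
          then ((A.ncard : ℝ≥0∞))⁻¹ * ν {B : Set Λ | (A ∩ B).Nonempty} else 0) ∂μ := by
        refine lintegral_congr fun A => ?_
        by_cases h : (1 : Λ) ∈ A ∧ A.Finite
        · simp [hgdef, h]
        · simp [hgdef, h]
end
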